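/- arXiv:math/0010117 — 2 statements merged into one kernel-verified Lean document; each statement's English description precedes it below -/
import Mathlib

section
/- The anti-commutators {X_iX_j + X_jX_i : 1 ≤ i ≤ j ≤ n} form a Gröbner basis of the anti-commutator ideal C with respect to ≺_t. Consequently, in_{≺_t}(C) is the two-sided ideal of K⟨X_1,…,X_n⟩ generated by the words {X_jX_i : 1 ≤ i ≤ j ≤ n}. -/
open scoped BigOperators

/-- Words in the letters `X_1, …, X_n`: the free monoid on `Fin n`. -/
abbrev Word (n : ℕ) := FreeMonoid (Fin n)

/-- The free associative algebra `K⟨X_1,…,X_n⟩`, as the monoid algebra of the free monoid. -/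
abbrev FA (K : Type) [Field K] (n : ℕ) := MonoidAlgebra K (Word n)

/-- The word `w`, viewed as an element of `K⟨X_1,…,X_n⟩`. -/
noncomputable def ofW (K : Type) [Field K] {n : ℕ} (w : Word n) : FA K n :=
  MonoidAlgebra.of K (Word n) w

/-- The variable `X_i`. -/
noncomputable def Xv (K : Type) [Field K] {n : ℕ} (i : Fin n) : FA K n :=
  ofW K (FreeMonoid.of i)

/-- The set of anti-commutators `X_iX_j + X_jX_i`, `i ≤ j`. -/
def antiCommSet (K : Type) [Field K] (n : ℕ) : Set (FA K n) :=
  { f | ∃ i j : Fin n, i ≤ j ∧ f = Xv K i * Xv K j + Xv K j * Xv K i }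

/-- The anti-commutator ideal `C`. -/
noncomputable def antiCommIdeal (K : Type) [Field K] (n : ℕ) : TwoSidedIdeal (FA K n) :=
  TwoSidedIdeal.span (antiCommSet K n)

/-- The exterior algebra `E(V)` as the quotient of `K⟨X_1,…,X_n⟩` by `C`. -/
abbrev EV (K : Type) [Field K] (n : ℕ) := (antiCommIdeal K n).ringCon.Quotient

/-- The quotient map `π : K⟨X_1,…,X_n⟩ → E(V)`. -/
noncomputable def piE (K : Type) [Field K] (n : ℕ) : FA K n →+* EV K n :=
  RingCon.mk' _

noncomputable instance (K : Type) [Field K] (n : ℕ) : Module K (EV K n) :=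
  { (inferInstance : DistribMulAction K (EV K n)) with
    add_smul := fun a b f => by
      obtain ⟨x, rfl⟩ := Quotient.mk''_surjective f
      show (((a + b) • x : FA K n) : EV K n) = ((a • x : FA K n) : EV K n) + ((b • x : FA K n) : EV K n)
      rw [← RingCon.coe_add, add_smul]
    zero_smul := fun f => by
      obtain ⟨x, rfl⟩ := Quotient.mk''_surjective f
      show (((0 : K) • x : FA K n) : EV K n) = ((0 : FA K n) : EV K n)
      rw [zero_smul] }

/-- The sorted word associated to a finite set of indices. -/
def wordOf {n : ℕ} (A : Finset (Fin n)) : Word n :=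
  FreeMonoid.ofList (A.sort (· ≤ ·))

/-- The square-free monomial `x_A ∈ E(V)`. -/
noncomputable def xF (K : Type) [Field K] {n : ℕ} (A : Finset (Fin n)) : EV K n :=
  piE K n (ofW K (wordOf A))

/-- A monoid well-order on the free commutative monoid on `x_1,…,x_n`
(identified additively with `Fin n →₀ ℕ`): a total, well-founded, translation
invariant strict order. -/
structure IsCommMonoidWellOrder (n : ℕ) (r : (Fin n →₀ ℕ) → (Fin n →₀ ℕ) → Prop) : Prop where
  trans : Transitive r
  irrefl : ∀ a, ¬ r a a
  total : ∀ a b, r a b ∨ a = b ∨ r b a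
  wf : WellFounded r
  mul_compat : ∀ a b c, r a b → r (a + c) (b + c)

/-- A monoid well-order on the free monoid `⟨X_1,…,X_n⟩`. -/
structure IsMonoidWellOrder (n : ℕ) (r : Word n → Word n → Prop) : Prop where
  trans : Transitive r
  irrefl : ∀ a, ¬ r a a
  total : ∀ a b, r a b ∨ a = b ∨ r b a
  wf : WellFounded r
  mul_compat : ∀ a b p q, r a b → r (p * a * q) (p * b * q)

/-- A finite set of indices, viewed as a square-free element of the free
commutative monoid. -/
noncomputable def sqMon {n : ℕ} (A : Finset (Fin n)) : Fin n →₀ ℕ :=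
  Multiset.toFinsupp (A.val)

/-- The restriction `≺_e` of the order `≺_s` (given by `es`) to square-free monomials,
identified with finite subsets of `{1,…,n}`. -/
def precE {n : ℕ} (es : (Fin n →₀ ℕ) → (Fin n →₀ ℕ) → Prop)
    (A B : Finset (Fin n)) : Prop :=
  es (sqMon A) (sqMon B)

/-- The degree-lexicographic order on words, with `X_1 < X_2 < ⋯ < X_n`. -/
def degLex {n : ℕ} (M N : Word n) : Prop :=
  (FreeMonoid.toList M).length < (FreeMonoid.toList N).length ∨
    ((FreeMonoid.toList M).length = (FreeMonoid.toList N).length ∧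
      List.Lex (· < ·) (FreeMonoid.toList M) (FreeMonoid.toList N))

/-- The set of letters of a word. -/
def lettersOf {n : ℕ} (M : Word n) : Finset (Fin n) :=
  (FreeMonoid.toList M).toFinset

/-- A word is square-free iff no letter is repeated; equivalently `π(M) ≠ 0` in `E(V)`. -/
def SqFreeWord {n : ℕ} (M : Word n) : Prop :=
  (FreeMonoid.toList M).Nodup

/-- The order `≺_t` on words: square-free words are compared first by the `≺_e`-order on
their underlying square-free commutative monomials, ties broken degree-lexicographically;
words mapping to `0` in the exterior algebra are compared degree-lexicographically. -/
def precT {n : ℕ} (es : (Fin n →₀ ℕ) → (Fin n →₀ ℕ) → Prop) (M N : Word n) : Prop :=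
  (SqFreeWord M ∧ SqFreeWord N ∧
    (precE es (lettersOf M) (lettersOf N) ∨ (lettersOf M = lettersOf N ∧ degLex M N)))
  ∨ ((¬ SqFreeWord M ∨ ¬ SqFreeWord N) ∧ degLex M N)

/-- `m` is the `r`-largest word occurring in `f` with nonzero coefficient. -/
def IsLeadWord {K : Type} [Field K] {n : ℕ} (r : Word n → Word n → Prop)
    (f : FA K n) (m : Word n) : Prop :=
  m ∈ f.coeff.support ∧ ∀ m' ∈ f.coeff.support, m' ≠ m → r m' m

/-- The initial ideal `in_r(J)` of a two-sided ideal `J ⊆ K⟨X_1,…,X_n⟩`: the two-sided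
ideal generated by the leading words of the nonzero elements of `J`. -/
noncomputable def inIdeal {K : Type} [Field K] {n : ℕ} (r : Word n → Word n → Prop)
    (J : TwoSidedIdeal (FA K n)) : TwoSidedIdeal (FA K n) :=
  TwoSidedIdeal.span { g | ∃ f m, f ∈ J ∧ f ≠ 0 ∧ IsLeadWord r f m ∧ g = ofW K m }

/-- `G` is a Gröbner basis of `J` w.r.t. `r`: `G` consists of nonzero elements of `J`
whose leading words generate `in_r(J)`. -/
def IsGB {K : Type} [Field K] {n : ℕ} (r : Word n → Word n → Prop)
    (J : TwoSidedIdeal (FA K n)) (G : Set (FA K n)) : Prop :=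
  (∀ g ∈ G, g ∈ J ∧ g ≠ 0) ∧
  TwoSidedIdeal.span { h | ∃ g ∈ G, ∃ m, IsLeadWord r g m ∧ h = ofW K m } = inIdeal r J

/-- `G` is a minimal Gröbner basis: no leading word of an element of `G` is a subword
(factor) of the leading word of another element. -/
def IsMinGB {K : Type} [Field K] {n : ℕ} (r : Word n → Word n → Prop)
    (J : TwoSidedIdeal (FA K n)) (G : Set (FA K n)) : Prop :=
  IsGB r J G ∧
  ∀ g ∈ G, ∀ g' ∈ G, g ≠ g' → ∀ m m', IsLeadWord r g m → IsLeadWord r g' m' →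
    ¬ (FreeMonoid.toList m <:+: FreeMonoid.toList m')

/-- An element of `K⟨X_1,…,X_n⟩` is homogeneous of degree `d`. -/
def IsHomogOfDeg {K : Type} [Field K] {n : ℕ} (f : FA K n) (d : ℕ) : Prop :=
  ∀ w ∈ f.coeff.support, (FreeMonoid.toList w).length = d

/-- `L ⊆ E(V)` is a monomial ideal: it is generated by square-free monomials. -/
def IsMonomialIdealE {K : Type} [Field K] {n : ℕ} (L : TwoSidedIdeal (EV K n)) : Prop :=
  ∃ S : Set (Finset (Fin n)), L = TwoSidedIdeal.span (xF K '' S)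

/-- The set `U_L(m)` for `m = x_A`: square-free monomials `u` in the variables strictly
between `min A` and `max A` such that `u·(m/x_{min A}) ∉ L` and `u·(m/x_{max A}) ∉ L`. -/
noncomputable def UL {K : Type} [Field K] {n : ℕ} (L : TwoSidedIdeal (EV K n))
    (A : Finset (Fin n)) : Set (Finset (Fin n)) :=
  { u | ∃ hA : A.Nonempty,
      (∀ i ∈ u, A.min' hA < i ∧ i < A.max' hA) ∧
      xF K u * xF K (A.erase (A.min' hA)) ∉ L ∧
      xF K u * xF K (A.erase (A.max' hA)) ∉ L }

/-- `x_A` is a minimal (monomial) generator of the monomial ideal `L`. -/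
def IsMinGenE {K : Type} [Field K] {n : ℕ} (L : TwoSidedIdeal (EV K n))
    (A : Finset (Fin n)) : Prop :=
  xF K A ∈ L ∧ ∀ B ⊆ A, B ≠ A → xF K B ∉ L

/-- `L` is squeezed: `U_L(m) = {1}` for every minimal generator `m` of `L`. -/
def IsSqueezed {K : Type} [Field K] {n : ℕ} (L : TwoSidedIdeal (EV K n)) : Prop :=
  ∀ A : Finset (Fin n), IsMinGenE L A → UL L A = {∅}

/-- `L` is stable: if `m ∈ L` and `x_j` is the largest variable dividing `m`,
then `x_i·(m/x_j) ∈ L` for all `i ≤ j`. -/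
def IsStableE {K : Type} [Field K] {n : ℕ} (L : TwoSidedIdeal (EV K n)) : Prop :=
  ∀ A : Finset (Fin n), ∀ hA : A.Nonempty, xF K A ∈ L →
    ∀ i ≤ A.max' hA, xF K {i} * xF K (A.erase (A.max' hA)) ∈ L

/-- `L` is strongly stable: if `m ∈ L` and `x_j` divides `m`, then
`x_i·(m/x_j) ∈ L` for all `i ≤ j` with `x_i·(m/x_j) ≠ 0`. -/
def IsStronglyStableE {K : Type} [Field K] {n : ℕ} (L : TwoSidedIdeal (EV K n)) : Prop :=
  ∀ A : Finset (Fin n), xF K A ∈ L → ∀ j ∈ A, ∀ i ≤ j,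
    xF K {i} * xF K (A.erase j) ≠ 0 → xF K {i} * xF K (A.erase j) ∈ L

/-- `δ` is the canonical `K`-linear section of `π`, sending `x_{i_1}⋯x_{i_r}` to
`X_{i_1}⋯X_{i_r}` for `i_1 < ⋯ < i_r`. -/
def IsDeltaSection {K : Type} [Field K] {n : ℕ} (δ : EV K n →ₗ[K] FA K n) : Prop :=
  ∀ A : Finset (Fin n), δ (xF K A) = ofW K (wordOf A)

/-- `x_A` is the `≺_e`-leading monomial of `0 ≠ f ∈ E(V)`, computed via the canonical
representative `δ f`. -/
def IsLeadE {K : Type} [Field K] {n : ℕ} (es : (Fin n →₀ ℕ) → (Fin n →₀ ℕ) → Prop)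
    (δ : EV K n →ₗ[K] FA K n) (f : EV K n) (A : Finset (Fin n)) : Prop :=
  wordOf A ∈ (δ f).coeff.support ∧
  ∀ w ∈ (δ f).coeff.support, w ≠ wordOf A → precE es (lettersOf w) A

/-- The initial ideal `in_{≺_e}(I)` of an ideal `I ⊆ E(V)`. -/
noncomputable def inE {K : Type} [Field K] {n : ℕ}
    (es : (Fin n →₀ ℕ) → (Fin n →₀ ℕ) → Prop) (δ : EV K n →ₗ[K] FA K n)
    (I : TwoSidedIdeal (EV K n)) : TwoSidedIdeal (EV K n) :=
  TwoSidedIdeal.span { h | ∃ f A, f ∈ I ∧ f ≠ 0 ∧ IsLeadE es δ f A ∧ h = xF K A }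

/-- `G` is a Gröbner basis of `I ⊆ E(V)` w.r.t. `≺_e`. -/
def IsGBE {K : Type} [Field K] {n : ℕ} (es : (Fin n →₀ ℕ) → (Fin n →₀ ℕ) → Prop)
    (δ : EV K n →ₗ[K] FA K n) (I : TwoSidedIdeal (EV K n)) (G : Set (EV K n)) : Prop :=
  (∀ g ∈ G, g ∈ I ∧ g ≠ 0) ∧
  TwoSidedIdeal.span { h | ∃ g ∈ G, ∃ A, IsLeadE es δ g A ∧ h = xF K A } = inE es δ I

/-- `G` is a minimal Gröbner basis of `I ⊆ E(V)` w.r.t. `≺_e`: moreover no leading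
monomial of an element of `G` divides the leading monomial of another element. -/
def IsMinGBE {K : Type} [Field K] {n : ℕ} (es : (Fin n →₀ ℕ) → (Fin n →₀ ℕ) → Prop)
    (δ : EV K n →ₗ[K] FA K n) (I : TwoSidedIdeal (EV K n)) (G : Set (EV K n)) : Prop :=
  IsGBE es δ I G ∧
  ∀ g ∈ G, ∀ g' ∈ G, g ≠ g' → ∀ A A', IsLeadE es δ g A → IsLeadE es δ g' A' → ¬ A ⊆ A'

/-- `I ⊆ E(V)` is a homogeneous ideal generated in degrees `≥ 2`: it is generated by
images of homogeneous elements of degree `≥ 2`. -/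
def IsHomogGenInDegGE2 {K : Type} [Field K] {n : ℕ} (I : TwoSidedIdeal (EV K n)) : Prop :=
  ∃ S : Set (FA K n), (∀ f ∈ S, ∃ d, 2 ≤ d ∧ IsHomogOfDeg f d) ∧
    I = TwoSidedIdeal.span (piE K n '' S)

/-- The action of an `n × n` matrix `g` on `K⟨X_1,…,X_n⟩` by the algebra endomorphism
determined by `X_i ↦ Σ_ℓ g_{ℓi} X_ℓ`. -/
noncomputable def actFA (K : Type) [Field K] {n : ℕ} (g : Matrix (Fin n) (Fin n) K) :
    FA K n →ₐ[K] FA K n :=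
  MonoidAlgebra.lift K (FA K n) (Word n)
    (FreeMonoid.lift fun i => ∑ l : Fin n, g l i • Xv K l)

/-- The degree-`d` homogeneous component of a two-sided ideal of `K⟨X_1,…,X_n⟩`,
as a `K`-subspace. -/
def degComp {K : Type} [Field K] {n : ℕ} (c : TwoSidedIdeal (FA K n)) (d : ℕ) :
    Submodule K (FA K n) where
  carrier := {f | f ∈ c ∧ IsHomogOfDeg f d}
  add_mem' := fun {a b} ha hb => ⟨c.add_mem ha.1 hb.1, fun w hw => by
    classical
    rcases Finset.mem_union.1 (Finsupp.support_add hw) with h | h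
    exacts [ha.2 w h, hb.2 w h]⟩
  zero_mem' := ⟨c.zero_mem, fun w hw => by simp at hw⟩
  smul_mem' := fun k f hf => ⟨by
      rw [Algebra.smul_def]
      exact c.mul_mem_left _ _ hf.1,
    fun w hw => hf.2 w (Finsupp.support_smul hw)⟩

/-- A two-sided ideal of `K⟨X_1,…,X_n⟩` is homogeneous (for the grading by word length). -/
def IsHomogIdeal {K : Type} [Field K] {n : ℕ} (a : TwoSidedIdeal (FA K n)) : Prop :=
  ∀ f ∈ a, ∀ d : ℕ, MonoidAlgebra.ofCoeff (f.coeff.filter (fun w => (FreeMonoid.toList w).length = d)) ∈ a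

/-- Evaluation of a polynomial in the matrix entries at an element of `GL_n(K)`. -/
noncomputable def evalGL {K : Type} [Field K] {n : ℕ}
    (p : MvPolynomial (Fin n × Fin n) K) (g : GL (Fin n) K) : K :=
  MvPolynomial.eval (fun q => (g : Matrix (Fin n) (Fin n) K) q.1 q.2) p

/-- The image `g(a)` of a two-sided ideal under the action of a matrix `g`. -/
noncomputable def mapIdealFA (K : Type) [Field K] {n : ℕ} (g : Matrix (Fin n) (Fin n) K)
    (a : TwoSidedIdeal (FA K n)) : TwoSidedIdeal (FA K n) :=
  TwoSidedIdeal.span ((actFA K g) '' (a : Set (FA K n)))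

/-- `b` is the generic initial ideal of `a` w.r.t. the order `r`: `b` is a monomial
ideal and there is a countable family of nonempty basic Zariski-open subsets of
`GL_n(K)` on whose (F_δ) intersection `in_r(g(a)) = b`. -/
def IsGin {K : Type} [Field K] {n : ℕ} (r : Word n → Word n → Prop)
    (a b : TwoSidedIdeal (FA K n)) : Prop :=
  (∃ S : Set (Word n), b = TwoSidedIdeal.span (ofW K '' S)) ∧
  ∃ ps : ℕ → MvPolynomial (Fin n × Fin n) K,
    (∀ k, ∃ g : GL (Fin n) K, evalGL (ps k) g ≠ 0) ∧
    (∃ g : GL (Fin n) K, ∀ k, evalGL (ps k) g ≠ 0) ∧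
    ∀ g : GL (Fin n) K, (∀ k, evalGL (ps k) g ≠ 0) →
      inIdeal r (mapIdealFA K (↑g) a) = b

/-- `bE` is the generic initial ideal of the ideal `I ⊆ E(V)` w.r.t. `≺_e`. -/
def IsGinE {K : Type} [Field K] {n : ℕ} (es : (Fin n →₀ ℕ) → (Fin n →₀ ℕ) → Prop)
    (δ : EV K n →ₗ[K] FA K n) (I bE : TwoSidedIdeal (EV K n)) : Prop :=
  IsMonomialIdealE bE ∧
  ∃ ps : ℕ → MvPolynomial (Fin n × Fin n) K,
    (∀ k, ∃ g : GL (Fin n) K, evalGL (ps k) g ≠ 0) ∧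
    (∃ g : GL (Fin n) K, ∀ k, evalGL (ps k) g ≠ 0) ∧
    ∀ g : GL (Fin n) K, (∀ k, evalGL (ps k) g ≠ 0) →
      ∀ gE : EV K n ≃+* EV K n, (∀ x, gE (piE K n x) = piE K n (actFA K (↑g) x)) →
        inE es δ (TwoSidedIdeal.span (⇑gE '' (I : Set (EV K n)))) = bE

namespace AntiCommAux

open List

variable {K : Type} [Field K] {n : ℕ}

/-- Number of inversions of a word. -/
def inv : List (Fin n) → ℕ
  | [] => 0
  | a :: t => t.countP (fun b => decide (b < a)) + inv t

lemma inv_append (l1 l2 : List (Fin n)) :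
    inv (l1 ++ l2) =
      inv l1 + inv l2 + (l1.map fun a => l2.countP (fun b => decide (b < a))).sum := by
  induction l1 with
  | nil => simp [inv]
  | cons a t ih =>
      simp only [List.cons_append, inv, List.append_eq, List.countP_append, ih, List.map_cons,
        List.sum_cons]
      omega

lemma inv_swap (p q : List (Fin n)) {i j : Fin n} (h : i < j) :
    inv (p ++ j :: i :: q) = inv (p ++ i :: j :: q) + 1 := by
  have h1 : inv (j :: i :: q) = inv (i :: j :: q) + 1 := by
    simp only [inv, List.countP_cons]
    have : decide (i < j) = true := by simpa using h
    have h2 : decide (j < i) = false := by simpa using (not_lt.mpr h.le)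
    simp [this, h2]
    omega
  have hmap : (p.map fun a => ((j :: i :: q).countP (fun b => decide (b < a)))) =
      (p.map fun a => ((i :: j :: q).countP (fun b => decide (b < a)))) := by
    apply List.map_congr_left
    intro a _
    simp only [List.countP_cons]
    omega
  rw [inv_append, inv_append, h1, hmap]
  omega

/-- The signed indicator of a word: `±1` at its letter set if square-free, else `0`. -/
noncomputable def phi0 (K : Type) [Field K] {n : ℕ} (w : Word n) : Finset (Fin n) →₀ K :=
  if (FreeMonoid.toList w).Nodup then
    ((-1 : K) ^ inv (FreeMonoid.toList w)) • Finsupp.single (lettersOf w) 1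
  else 0

/-- The linear extension of `phi0` to the free algebra. -/
noncomputable def Phi (K : Type) [Field K] (n : ℕ) : FA K n →ₗ[K] (Finset (Fin n) →₀ K) :=
  (Finsupp.lsum K fun w => LinearMap.toSpanSingleton K _ (phi0 K w)) ∘ₗ
    (MonoidAlgebra.coeffLinearEquiv K).toLinearMap

lemma Phi_single (w : Word n) (c : K) :
    Phi K n (MonoidAlgebra.single w c) = c • phi0 K w := by
  have h := Finsupp.lsum_single (S := K)
    (fun w => LinearMap.toSpanSingleton K (Finset (Fin n) →₀ K) (phi0 K w)) w c
  rw [LinearMap.toSpanSingleton_apply] at h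
  exact h

lemma Phi_ofW (w : Word n) : Phi K n (ofW K w) = phi0 K w := by
  have : ofW K w = MonoidAlgebra.single w 1 := rfl
  rw [this, Phi_single, one_smul]

lemma phi0_add_swap (p q : List (Fin n)) {i j : Fin n} (hij : i < j) :
    phi0 K (FreeMonoid.ofList (p ++ i :: j :: q)) +
      phi0 K (FreeMonoid.ofList (p ++ j :: i :: q)) = 0 := by
  have hperm : (p ++ i :: j :: q) ~ (p ++ j :: i :: q) :=
    List.Perm.append_left p (List.Perm.swap j i q)
  by_cases hnd : (p ++ i :: j :: q).Nodup
  · have hnd' : (p ++ j :: i :: q).Nodup := hperm.nodup_iff.mp hnd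
    have hfin : lettersOf (FreeMonoid.ofList (p ++ i :: j :: q)) =
        lettersOf (FreeMonoid.ofList (p ++ j :: i :: q)) := by
      simp only [lettersOf, FreeMonoid.toList_ofList]
      exact List.toFinset_eq_of_perm _ _ hperm
    simp only [phi0, FreeMonoid.toList_ofList, if_pos hnd, if_pos hnd', hfin,
      inv_swap p q hij, pow_succ]
    rw [← add_smul]
    ring_nf
    simp
  · have hnd' : ¬ (p ++ j :: i :: q).Nodup := fun h => hnd (hperm.nodup_iff.mpr h)
    simp [phi0, FreeMonoid.toList_ofList, hnd, hnd']

lemma Phi_mono {i j : Fin n} (hij : i ≤ j) (p q : Word n) :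
    Phi K n (ofW K p * (Xv K i * Xv K j + Xv K j * Xv K i) * ofW K q) = 0 := by
  have expand : ofW K p * (Xv K i * Xv K j + Xv K j * Xv K i) * ofW K q =
      ofW K (p * (FreeMonoid.of i * FreeMonoid.of j) * q) +
        ofW K (p * (FreeMonoid.of j * FreeMonoid.of i) * q) := by
    simp only [Xv, ofW, mul_add, add_mul, map_mul]
  have hword : ∀ a b : Fin n, p * (FreeMonoid.of a * FreeMonoid.of b) * q =
      FreeMonoid.ofList (FreeMonoid.toList p ++ a :: b :: FreeMonoid.toList q) := by
    intro a b
    apply FreeMonoid.toList.injective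
    simp
  rw [expand, map_add, Phi_ofW, Phi_ofW, hword, hword]
  rcases eq_or_lt_of_le hij with rfl | h
  · have hnd : ¬ (FreeMonoid.toList p ++ i :: i :: FreeMonoid.toList q).Nodup := by
      intro h
      have := (List.nodup_append.mp h).2.1
      simp at this
    simp [phi0, FreeMonoid.toList_ofList, hnd]
  · exact phi0_add_swap _ _ h

lemma Phi_anti {i j : Fin n} (hij : i ≤ j) (a b : FA K n) :
    Phi K n (a * (Xv K i * Xv K j + Xv K j * Xv K i) * b) = 0 := by
  set g : FA K n := Xv K i * Xv K j + Xv K j * Xv K i with hg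
  induction a using MonoidAlgebra.induction_linear generalizing b with
  | zero => simp
  | add f f' hf hf' => rw [add_mul, add_mul, map_add, hf, hf', add_zero]
  | single w c =>
      induction b using MonoidAlgebra.induction_linear with
      | zero => simp
      | add f f' hf hf' => rw [mul_add, map_add, hf, hf', add_zero]
      | single w' c' =>
          have e1 : (MonoidAlgebra.single w c : FA K n) = c • ofW K w := by
            rw [ofW, MonoidAlgebra.of_apply, MonoidAlgebra.smul_single', mul_one]
          have e2 : (MonoidAlgebra.single w' c' : FA K n) = c' • ofW K w' := by
            rw [ofW, MonoidAlgebra.of_apply, MonoidAlgebra.smul_single', mul_one]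
          rw [e1, e2, smul_mul_assoc, smul_mul_assoc, mul_smul_comm, map_smul, map_smul,
            Phi_mono hij, smul_zero, smul_zero]

lemma Phi_vanish {f : FA K n} (hf : f ∈ antiCommIdeal K n) : Phi K n f = 0 := by
  let J : TwoSidedIdeal (FA K n) :=
    TwoSidedIdeal.mk' {f | ∀ a b : FA K n, Phi K n (a * f * b) = 0}
      (by intro a b; simp)
      (by intro x y hx hy a b
          rw [mul_add, add_mul, map_add, hx, hy, add_zero])
      (by intro x hx a b
          rw [mul_neg, neg_mul, map_neg, hx, neg_zero])
      (by intro x y hy a b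
          rw [← mul_assoc a x y]
          exact hy (a * x) b)
      (by intro x y hx a b
          rw [← mul_assoc a x y, mul_assoc]
          exact hx a (y * b))
  have hsub : antiCommSet K n ⊆ (J : Set (FA K n)) := by
    rintro g ⟨i, j, hij, rfl⟩
    simp only [J, SetLike.mem_coe, TwoSidedIdeal.mem_mk', Set.mem_setOf_eq]
    intro a b
    exact Phi_anti hij a b
  have hmem : f ∈ J := TwoSidedIdeal.mem_span_iff.mp hf J hsub
  have := (TwoSidedIdeal.mem_mk' _ _ _ _ _ _ f).mp hmem 1 1
  simpa using this


lemma exists_desc_of_not_chain :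
    ∀ l : List (Fin n), ¬ l.Chain' (· < ·) →
      ∃ (p : List (Fin n)) (a b : Fin n) (q : List (Fin n)), ¬ a < b ∧ l = p ++ a :: b :: q
  | [], h => absurd List.isChain_nil h
  | [x], h => absurd (List.isChain_singleton x) h
  | a :: b :: t, h => by
      by_cases hab : a < b
      · have hnc : ¬ (b :: t).Chain' (· < ·) := fun hc => h (List.isChain_cons_cons.mpr ⟨hab, hc⟩)
        obtain ⟨p, x, y, q, hxy, heq⟩ := exists_desc_of_not_chain (b :: t) hnc
        exact ⟨a :: p, x, y, q, hxy, by rw [List.cons_append, ← heq]⟩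
      · exact ⟨[], a, b, t, hab, rfl⟩

lemma sorted_lex_min {l l' : List (Fin n)} (hs : l.Pairwise (· < ·)) (hp : l' ~ l)
    (hne : l' ≠ l) : List.Lex (· < ·) l l' := by
  induction l generalizing l' with
  | nil => exact absurd hp.eq_nil hne
  | cons a t ih =>
      cases l' with
      | nil => exact absurd hp.symm.eq_nil (List.cons_ne_nil a t)
      | cons b t' =>
          have hb : b ∈ a :: t := hp.subset List.mem_cons_self
          rcases List.mem_cons.mp hb with rfl | hbt
          · have hp' : t' ~ t := hp.cons_inv
            have hne' : t' ≠ t := fun h => hne (by rw [h])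
            exact List.Lex.cons (ih hs.of_cons hp' hne')
          · exact List.Lex.rel ((List.pairwise_cons.mp hs).1 b hbt)

lemma phi0_apply_ne_zero {w : Word n} {A : Finset (Fin n)}
    (h : phi0 K w A ≠ 0) : (FreeMonoid.toList w).Nodup ∧ lettersOf w = A := by
  by_cases hnd : (FreeMonoid.toList w).Nodup
  · refine ⟨hnd, ?_⟩
    by_contra hA
    simp [phi0, hnd, Finsupp.single_apply, hA] at h
  · simp [phi0, hnd] at h

lemma phi0_apply_self {w : Word n} (hnd : (FreeMonoid.toList w).Nodup) :
    phi0 K w (lettersOf w) = (-1 : K) ^ inv (FreeMonoid.toList w) := by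
  simp [phi0, hnd]

lemma Phi_apply (f : FA K n) (A : Finset (Fin n)) :
    Phi K n f A = ∑ w ∈ f.coeff.support, f.coeff w * phi0 K w A := by
  classical
  have h1 : Phi K n f = f.coeff.sum fun w c => c • phi0 K w := by
    exact Finsupp.sum_congr fun w _ => LinearMap.toSpanSingleton_apply K _ (phi0 K w) _
  rw [h1, Finsupp.sum_apply]
  rfl

lemma lead_has_desc {es : (Fin n →₀ ℕ) → (Fin n →₀ ℕ) → Prop}
    (hes : IsCommMonoidWellOrder n es) {f : FA K n}
    (hfC : f ∈ antiCommIdeal K n) {m : Word n}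
    (hlead : IsLeadWord (precT es) f m) :
    ∃ (p q : List (Fin n)) (i j : Fin n), i ≤ j ∧
      FreeMonoid.toList m = p ++ j :: i :: q := by
  by_contra hno
  push_neg at hno
  have hchain : (FreeMonoid.toList m).Chain' (· < ·) := by
    by_contra hc
    obtain ⟨p, a, b, q, hab, heq⟩ := exists_desc_of_not_chain _ hc
    exact hno p q b a (le_of_not_gt hab) heq
  have hsorted : (FreeMonoid.toList m).Pairwise (· < ·) := List.isChain_iff_pairwise.mp hchain
  have hnodm : (FreeMonoid.toList m).Nodup := hsorted.imp (fun h => ne_of_lt h)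
  set A := lettersOf m with hA
  have h0 : ∑ w ∈ f.coeff.support, f.coeff w * phi0 K w A = 0 := by
    rw [← Phi_apply, Phi_vanish hfC, Finsupp.coe_zero, Pi.zero_apply]
  have hm : m ∈ f.coeff.support := hlead.1
  have htm : f.coeff m * phi0 K m A ≠ 0 := by
    refine mul_ne_zero (Finsupp.mem_support_iff.mp hm) ?_
    rw [hA, phi0_apply_self hnodm]
    exact pow_ne_zero _ (neg_ne_zero.mpr one_ne_zero)
  have hex : ∃ w ∈ f.coeff.support, w ≠ m ∧ f.coeff w * phi0 K w A ≠ 0 := by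
    by_contra hco
    push_neg at hco
    have hsum := Finset.sum_eq_single_of_mem m hm fun w hw hne => hco w hw hne
    exact htm (hsum.symm.trans h0)
  obtain ⟨w, hw, hwm, ht⟩ := hex
  have hphiw : phi0 K w A ≠ 0 := fun h => ht (by rw [h, mul_zero])
  obtain ⟨hndw, hAw⟩ := phi0_apply_ne_zero hphiw
  have hperm : FreeMonoid.toList w ~ FreeMonoid.toList m :=
    List.perm_of_nodup_nodup_toFinset_eq hndw hnodm hAw
  have hlex : List.Lex (· < ·) (FreeMonoid.toList m) (FreeMonoid.toList w) :=
    sorted_lex_min hsorted hperm fun h => hwm (FreeMonoid.toList.injective h)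
  have hwm' : precT es w m := hlead.2 w hw hwm
  have hlen := hperm.length_eq
  rcases hwm' with ⟨_, _, hcase⟩ | ⟨hbad, _⟩
  · rcases hcase with hpe | ⟨_, hdl⟩
    · rw [hAw] at hpe
      exact hes.irrefl _ hpe
    · rcases hdl with hl | ⟨_, hlex'⟩
      · omega
      · exact asymm hlex hlex'
  · rcases hbad with h | h
    · exact h hndw
    · exact h hnodm

lemma XvXv (a b : Fin n) :
    (Xv K a * Xv K b : FA K n) =
      MonoidAlgebra.single (FreeMonoid.of a * FreeMonoid.of b) 1 := by
  rw [Xv, Xv, ofW, ofW, ← map_mul]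
  rfl

lemma toList_of_mul (a b : Fin n) :
    FreeMonoid.toList (FreeMonoid.of a * FreeMonoid.of b) = [a, b] := rfl

lemma gen_lead {es : (Fin n →₀ ℕ) → (Fin n →₀ ℕ) → Prop} {i j : Fin n} (hij : i ≤ j)
    (hchar : (2 : K) ≠ 0) :
    IsLeadWord (precT es) (Xv K i * Xv K j + Xv K j * Xv K i)
        (FreeMonoid.of j * FreeMonoid.of i) ∧
      (Xv K i * Xv K j + Xv K j * Xv K i : FA K n) ≠ 0 := by
  classical
  rcases eq_or_lt_of_le hij with rfl | hlt
  · have hg : (Xv K i * Xv K i + Xv K i * Xv K i : FA K n) =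
        MonoidAlgebra.single (FreeMonoid.of i * FreeMonoid.of i) (2 : K) := by
      rw [XvXv, ← MonoidAlgebra.single_add]
      norm_num
    refine ⟨⟨?_, ?_⟩, ?_⟩
    · rw [hg, MonoidAlgebra.coeff_single, Finsupp.mem_support_iff, Finsupp.single_apply, if_pos rfl]
      exact hchar
    · intro m' hm' hne
      rw [hg, MonoidAlgebra.coeff_single, Finsupp.support_single_ne_zero _ hchar, Finset.mem_singleton] at hm'
      exact absurd hm' hne
    · intro h0
      rw [hg] at h0
      exact hchar (MonoidAlgebra.single_eq_zero.mp h0)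
  · have hne : (FreeMonoid.of i * FreeMonoid.of j : Word n) ≠
        FreeMonoid.of j * FreeMonoid.of i := by
      intro h
      have h2 := congrArg FreeMonoid.toList h
      rw [toList_of_mul, toList_of_mul] at h2
      exact absurd (List.head_eq_of_cons_eq h2) hlt.ne
    have hcoeff : (Xv K i * Xv K j + Xv K j * Xv K i : FA K n).coeff
        (FreeMonoid.of j * FreeMonoid.of i) = 1 := by
      rw [XvXv, XvXv, MonoidAlgebra.coeff_add, MonoidAlgebra.coeff_single, MonoidAlgebra.coeff_single,
        Finsupp.add_apply, Finsupp.single_apply, Finsupp.single_apply,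
        if_neg hne, if_pos rfl, zero_add]
    have hsupp : (Xv K i * Xv K j + Xv K j * Xv K i : FA K n).coeff.support ⊆
        {FreeMonoid.of i * FreeMonoid.of j, FreeMonoid.of j * FreeMonoid.of i} := by
      intro x hx
      rw [MonoidAlgebra.coeff_add] at hx
      have hx2 := Finsupp.support_add hx
      rw [XvXv, XvXv, MonoidAlgebra.coeff_single, MonoidAlgebra.coeff_single] at hx2
      rcases Finset.mem_union.mp hx2 with h | h
      · exact Finset.mem_insert.mpr (Or.inl (Finset.mem_singleton.mp (Finsupp.support_single_subset h)))
      · exact Finset.mem_insert.mpr (Or.inr (Finsupp.support_single_subset h))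
    refine ⟨⟨?_, ?_⟩, ?_⟩
    · rw [Finsupp.mem_support_iff, hcoeff]
      exact one_ne_zero
    · intro m' hm' hnem
      rcases Finset.mem_insert.mp (hsupp hm') with rfl | h
      · -- precT es (of i * of j) (of j * of i)
        refine Or.inl ⟨?_, ?_, Or.inr ⟨?_, Or.inr ⟨rfl, ?_⟩⟩⟩
        · show (FreeMonoid.toList (FreeMonoid.of i * FreeMonoid.of j)).Nodup
          rw [toList_of_mul]
          simp [hlt.ne]
        · show (FreeMonoid.toList (FreeMonoid.of j * FreeMonoid.of i)).Nodup
          rw [toList_of_mul]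
          simp [hlt.ne']
        · show lettersOf _ = lettersOf _
          simp only [lettersOf, toList_of_mul]
          ext x
          simp [or_comm]
        · show List.Lex (· < ·) (FreeMonoid.toList (FreeMonoid.of i * FreeMonoid.of j))
            (FreeMonoid.toList (FreeMonoid.of j * FreeMonoid.of i))
          rw [toList_of_mul, toList_of_mul]
          exact List.Lex.rel hlt
      · exact absurd (Finset.mem_singleton.mp h) hnem
    · intro h0
      rw [h0, MonoidAlgebra.coeff_zero, Finsupp.coe_zero, Pi.zero_apply] at hcoeff
      exact zero_ne_one hcoeff
end AntiCommAux

/-- The anti-commutators `X_iX_j + X_jX_i`, `1 ≤ i ≤ j ≤ n`, form a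
Gröbner basis of the anti-commutator ideal `C` with respect to `≺_t`; consequently
`in_{≺_t}(C)` is the two-sided ideal generated by the words `X_jX_i`, `1 ≤ i ≤ j ≤ n`. -/
theorem antiCommutators_isGB (K : Type) [Field K] (hchar : (2 : K) ≠ 0)
    (n : ℕ) (hn : 1 ≤ n)
    (es : (Fin n →₀ ℕ) → (Fin n →₀ ℕ) → Prop)
    (hes : IsCommMonoidWellOrder n es) :
    IsGB (precT es) (antiCommIdeal K n) (antiCommSet K n) ∧
    inIdeal (precT es) (antiCommIdeal K n) =
      TwoSidedIdeal.span
        { f | ∃ i j : Fin n, i ≤ j ∧ f = ofW K (FreeMonoid.of j * FreeMonoid.of i) } := by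
  classical
  set S1 : Set (FA K n) :=
    { h | ∃ g ∈ antiCommSet K n, ∃ m, IsLeadWord (precT es) g m ∧ h = ofW K m } with hS1
  set S3 : Set (FA K n) :=
    { g | ∃ f m, f ∈ antiCommIdeal K n ∧ f ≠ 0 ∧ IsLeadWord (precT es) f m ∧ g = ofW K m }
    with hS3
  set S2 : Set (FA K n) :=
    { f | ∃ i j : Fin n, i ≤ j ∧ f = ofW K (FreeMonoid.of j * FreeMonoid.of i) } with hS2
  have hS1S3 : S1 ⊆ S3 := by
    rintro h ⟨g, hgG, m, hl, rfl⟩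
    obtain ⟨i, j, hij, rfl⟩ := hgG
    exact ⟨_, m, TwoSidedIdeal.subset_span ⟨i, j, hij, rfl⟩,
      (AntiCommAux.gen_lead (es := es) hij hchar).2, hl, rfl⟩
  have hS2S1 : S2 ⊆ S1 := by
    rintro h ⟨i, j, hij, rfl⟩
    exact ⟨Xv K i * Xv K j + Xv K j * Xv K i, ⟨i, j, hij, rfl⟩,
      FreeMonoid.of j * FreeMonoid.of i, (AntiCommAux.gen_lead hij hchar).1, rfl⟩
  have hS3span2 : S3 ⊆ (TwoSidedIdeal.span S2 : Set (FA K n)) := by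
    rintro h ⟨f, m, hfC, hf0, hl, rfl⟩
    obtain ⟨p, q, i, j, hij, heq⟩ := AntiCommAux.lead_has_desc hes hfC hl
    have hm : m = FreeMonoid.ofList p * (FreeMonoid.of j * FreeMonoid.of i) *
        FreeMonoid.ofList q := by
      apply FreeMonoid.toList.injective
      simp [heq]
    rw [SetLike.mem_coe, hm, ofW, map_mul, map_mul]
    refine TwoSidedIdeal.mul_mem_right _ _ _ ?_
    refine TwoSidedIdeal.mul_mem_left _ _ _ ?_
    exact TwoSidedIdeal.subset_span ⟨i, j, hij, rfl⟩
  have hle31 : TwoSidedIdeal.span S3 ≤ TwoSidedIdeal.span S2 := by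
    intro x hx
    exact TwoSidedIdeal.mem_span_iff.mp hx _ hS3span2
  constructor
  · constructor
    · rintro g ⟨i, j, hij, rfl⟩
      exact ⟨TwoSidedIdeal.subset_span ⟨i, j, hij, rfl⟩,
        (AntiCommAux.gen_lead (es := es) hij hchar).2⟩
    · exact le_antisymm (TwoSidedIdeal.span_mono hS1S3)
        (hle31.trans (TwoSidedIdeal.span_mono hS2S1))
  · exact le_antisymm hle31 (TwoSidedIdeal.span_mono (hS2S1.trans hS1S3))
end

section
/- In K⟨X_1,X_2,X_3⟩, let b be the two-sided ideal generated by the words X_2X_3, X_1², X_2², X_3², X_2X_1, X_3X_1, X_3X_2. Let β be the algebra automorphism determined by β(X_1) = X_1 + X_2, β(X_2) = X_2, β(X_3) = X_3. Then β(X_1²) = X_1² + X_1X_2 + X_2X_1 + X_2² does not belong to b; in particular, b is not invariant under the Borel transformation β (the generic initial ideal of an ideal containing the anti-commutator ideal need not be Borel-fixed). -/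
open scoped BigOperators

namespace GinAux

def gl : List (List (Fin 3)) :=
  [[1,2],[0,0],[1,1],[2,2],[1,0],[2,0],[2,1]]

instance : DecidableEq (Word 3) := inferInstanceAs (DecidableEq (List (Fin 3)))

def Bad (w : Word 3) : Prop := ∃ l ∈ gl, l <:+: FreeMonoid.toList w

lemma bad_mul_left (u w : Word 3) (h : Bad w) : Bad (u * w) := by
  obtain ⟨l, hl, hinf⟩ := h
  exact ⟨l, hl, hinf.trans ⟨FreeMonoid.toList u, [], by simp [FreeMonoid.toList_mul]⟩⟩

lemma bad_mul_right (w u : Word 3) (h : Bad w) : Bad (w * u) := by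
  obtain ⟨l, hl, hinf⟩ := h
  exact ⟨l, hl, hinf.trans ⟨[], FreeMonoid.toList u, by simp [FreeMonoid.toList_mul]⟩⟩

noncomputable def badIdeal (K : Type) [Field K] : TwoSidedIdeal (FA K 3) :=
  TwoSidedIdeal.mk' {f : FA K 3 | ∀ w ∈ f.coeff.support, Bad w}
    (by simp)
    (by
      intro x y hx hy w hw
      rw [MonoidAlgebra.coeff_add] at hw
      rcases Finset.mem_union.1 (Finsupp.support_add hw) with h | h
      exacts [hx w h, hy w h])
    (by
      intro x hx w hw
      rw [MonoidAlgebra.coeff_neg, Finsupp.support_neg] at hw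
      exact hx w hw)
    (by
      intro x y hy w hw
      classical
      obtain ⟨a, ha, b, hb, rfl⟩ := Finset.mem_mul.1 (MonoidAlgebra.support_coeff_mul_subset x y hw)
      exact bad_mul_left a b (hy b hb))
    (by
      intro x y hx w hw
      classical
      obtain ⟨a, ha, b, hb, rfl⟩ := Finset.mem_mul.1 (MonoidAlgebra.support_coeff_mul_subset x y hw)
      exact bad_mul_right a b (hx a ha))

lemma mem_badIdeal_iff (K : Type) [Field K] (f : FA K 3) :
    f ∈ badIdeal K ↔ ∀ w ∈ f.coeff.support, Bad w := by
  unfold badIdeal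
  exact TwoSidedIdeal.mem_mk' _ _ _ _ _ _ f

lemma ofW_mem_badIdeal (K : Type) [Field K] (i j : Fin 3) (h : [i, j] ∈ gl) :
    ofW K (FreeMonoid.of i * FreeMonoid.of j) ∈ badIdeal K := by
  rw [mem_badIdeal_iff]
  intro w hw
  simp only [ofW, MonoidAlgebra.of_apply, MonoidAlgebra.coeff_single] at hw
  have : w = FreeMonoid.of i * FreeMonoid.of j := by
    have := Finsupp.support_single_subset hw
    simpa using this
  subst this
  exact ⟨[i, j], h, by simp [FreeMonoid.toList_mul]⟩

lemma not_bad01 : ¬ Bad (FreeMonoid.of (0 : Fin 3) * FreeMonoid.of (1 : Fin 3) : Word 3) := by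
  unfold Bad
  decide

end GinAux

/-- In `K⟨X_1,X_2,X_3⟩`, let `b` be the two-sided (monomial) ideal
generated by the words `X_2X_3, X_1², X_2², X_3², X_2X_1, X_3X_1, X_3X_2`, and let `β`
be the algebra automorphism determined by `β(X_1) = X_1 + X_2`, `β(X_2) = X_2`,
`β(X_3) = X_3`.  Then `β(X_1²) = X_1² + X_1X_2 + X_2X_1 + X_2²` does not belong to
`b`; in particular `b` is not invariant under the Borel transformation `β`. -/
theorem gin_not_borel_fixed (K : Type) [Field K] (hchar : (2 : K) ≠ 0)
    (b : TwoSidedIdeal (FA K 3))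
    (hb : b = TwoSidedIdeal.span
      { ofW K (FreeMonoid.of (1 : Fin 3) * FreeMonoid.of (2 : Fin 3)),
        ofW K (FreeMonoid.of (0 : Fin 3) * FreeMonoid.of (0 : Fin 3)),
        ofW K (FreeMonoid.of (1 : Fin 3) * FreeMonoid.of (1 : Fin 3)),
        ofW K (FreeMonoid.of (2 : Fin 3) * FreeMonoid.of (2 : Fin 3)),
        ofW K (FreeMonoid.of (1 : Fin 3) * FreeMonoid.of (0 : Fin 3)),
        ofW K (FreeMonoid.of (2 : Fin 3) * FreeMonoid.of (0 : Fin 3)),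
        ofW K (FreeMonoid.of (2 : Fin 3) * FreeMonoid.of (1 : Fin 3)) })
    (β : FA K 3 →ₐ[K] FA K 3)
    (hβ1 : β (Xv K (0 : Fin 3)) = Xv K (0 : Fin 3) + Xv K (1 : Fin 3))
    (hβ2 : β (Xv K (1 : Fin 3)) = Xv K (1 : Fin 3))
    (hβ3 : β (Xv K (2 : Fin 3)) = Xv K (2 : Fin 3)) :
    β (Xv K (0 : Fin 3) * Xv K (0 : Fin 3)) =
      Xv K (0 : Fin 3) * Xv K (0 : Fin 3) + Xv K (0 : Fin 3) * Xv K (1 : Fin 3) +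
        Xv K (1 : Fin 3) * Xv K (0 : Fin 3) + Xv K (1 : Fin 3) * Xv K (1 : Fin 3) ∧
    β (Xv K (0 : Fin 3) * Xv K (0 : Fin 3)) ∉ b ∧
    ¬ (⇑β '' (b : Set (FA K 3)) ⊆ (b : Set (FA K 3))) := by
  classical
  have hXv : ∀ i j : Fin 3, Xv K i * Xv K j = ofW K (FreeMonoid.of i * FreeMonoid.of j) :=
    fun i j => (map_mul (MonoidAlgebra.of K (Word 3)) _ _).symm
  have hexp : β (Xv K (0 : Fin 3) * Xv K (0 : Fin 3)) =
      Xv K (0 : Fin 3) * Xv K (0 : Fin 3) + Xv K (0 : Fin 3) * Xv K (1 : Fin 3) +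
        Xv K (1 : Fin 3) * Xv K (0 : Fin 3) + Xv K (1 : Fin 3) * Xv K (1 : Fin 3) := by
    rw [map_mul, hβ1]
    noncomm_ring
  have hnotmem : β (Xv K (0 : Fin 3) * Xv K (0 : Fin 3)) ∉ b := by
    intro hmem
    have hsub : β (Xv K (0 : Fin 3) * Xv K (0 : Fin 3)) ∈ GinAux.badIdeal K := by
      rw [hb] at hmem
      refine TwoSidedIdeal.mem_span_iff.1 hmem _ ?_
      intro x hx
      simp only [Set.mem_insert_iff, Set.mem_singleton_iff] at hx
      rcases hx with h | h | h | h | h | h | h <;> subst h <;>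
        exact GinAux.ofW_mem_badIdeal K _ _ (by decide)
    rw [GinAux.mem_badIdeal_iff] at hsub
    have hwsupp : (FreeMonoid.of (0 : Fin 3) * FreeMonoid.of (1 : Fin 3) : Word 3) ∈
        (β (Xv K (0 : Fin 3) * Xv K (0 : Fin 3))).coeff.support := by
      rw [hexp, hXv, hXv, hXv, hXv]
      rw [Finsupp.mem_support_iff]
      have e1 : (FreeMonoid.of (0 : Fin 3) * FreeMonoid.of (0 : Fin 3) : Word 3) ≠
          FreeMonoid.of (0 : Fin 3) * FreeMonoid.of (1 : Fin 3) := by decide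
      have e2 : (FreeMonoid.of (1 : Fin 3) * FreeMonoid.of (0 : Fin 3) : Word 3) ≠
          FreeMonoid.of (0 : Fin 3) * FreeMonoid.of (1 : Fin 3) := by decide
      have e3 : (FreeMonoid.of (1 : Fin 3) * FreeMonoid.of (1 : Fin 3) : Word 3) ≠
          FreeMonoid.of (0 : Fin 3) * FreeMonoid.of (1 : Fin 3) := by decide
      simp only [ofW, MonoidAlgebra.of_apply, MonoidAlgebra.coeff_add, MonoidAlgebra.coeff_single]
      rw [Finsupp.add_apply, Finsupp.add_apply, Finsupp.add_apply,
        Finsupp.single_eq_of_ne e1.symm, Finsupp.single_eq_of_ne e2.symm, Finsupp.single_eq_of_ne e3.symm,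
        Finsupp.single_eq_same]
      norm_num
    have hbad := hsub _ hwsupp
    exact GinAux.not_bad01 hbad
  refine ⟨hexp, hnotmem, ?_⟩
  intro hsubset
  refine hnotmem (hsubset ⟨Xv K (0 : Fin 3) * Xv K (0 : Fin 3), ?_, rfl⟩)
  rw [hb, hXv]
  exact TwoSidedIdeal.subset_span (by simp)
end
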